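/- Let C be a repeated-root cyclic code of length n = p^s·n' over F_q (gcd(n',p) = 1) with generator polynomial g(X)^{p^s}, where g ∈ F_q[X] has γ^i as a (simple) root for every i in a set D^F ⊆ {0,…,n'−1} and γ has order n' in an extension field of F_q. Then every folded codeword c^F ∈ C^F (viewed as a polynomial of degree < n' over F_{q^{p^s}}) satisfies c^F(γ^{p^s·i mod n'}) = 0 for every i ∈ D^F. -/

import Mathlib

open Polynomial

/-- Folding of a length-`p^s * n'` word (given as a polynomial `c` over `F`) into a
length-`n'` word over the extension `L` of degree `p^s`, using the basis element `ζ`: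
block `j` of `c` is mapped to the coefficient `Σ_{u < p^s} c_{u + j p^s} ζ^u` of `X^j`. -/
noncomputable def foldPoly (F L : Type*) [Field F] [Field L] [Algebra F L]
    (ζ : L) (ps n' : ℕ) (c : Polynomial F) : Polynomial L :=
  ∑ j ∈ Finset.range n',
    Polynomial.C (∑ u ∈ Finset.range ps, algebraMap F L (c.coeff (u + j * ps)) * ζ ^ u) *
      Polynomial.X ^ j

/-- **Roots of folded codewords.**  Let `C` be the repeated-root cyclic code of length
`n = p^s * n'` over `F_q` (`gcd(n', p) = 1`) with generator polynomial `g^{p^s}`, where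
`γ^i` is a root of `g` for every `i` in `D^F ⊆ {0,…,n'-1}` and `γ` has order `n'` in an
extension field `Ω`.  Then every folded codeword `c^F` satisfies
`c^F(γ^{p^s · i mod n'}) = 0` for every `i ∈ D^F`. -/
theorem foldPoly_root
    {F L Ω : Type*} [Field F] [Fintype F] [Field L] [Field Ω]
    [Algebra F L] [Algebra F Ω] [Algebra L Ω] [IsScalarTower F L Ω]
    (p t s n' : ℕ) (hp : p.Prime) (hq : Fintype.card F = p ^ t) (ht : 0 < t)
    (hn'p : Nat.Coprime n' p)
    (ζ : L) (bζ : Module.Basis (Fin (p ^ s)) F L) (hbζ : ∀ u : Fin (p ^ s), bζ u = ζ ^ (u : ℕ))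
    (γ : Ωˣ) (hγ : orderOf γ = n')
    (g : F[X]) (DF : Finset ℕ) (hDF : ∀ i ∈ DF, i < n')
    (hg_roots : ∀ i ∈ DF, aeval ((γ ^ i : Ωˣ) : Ω) g = 0)
    (c : F[X]) (hc_deg : c.degree < ((p ^ s * n' : ℕ) : WithBot ℕ))
    (hc_mem : g ^ p ^ s ∣ c) :
    ∀ i ∈ DF,
      aeval ((γ ^ ((p ^ s * i) % n') : Ωˣ) : Ω) (foldPoly F L ζ (p ^ s) n' c) = 0 := by
  intro i hi
  set P := p ^ s with hPdef
  have hP0 : 0 < P := pow_pos hp.pos s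
  have hn'0 : 0 < n' := lt_of_le_of_lt (Nat.zero_le i) (hDF i hi)
  -- characteristic
  have hcharF : CharP F p := by
    obtain ⟨n, hr, hcard⟩ := FiniteField.card F (ringChar F)
    have hpr : p ∣ ringChar F ^ (n : ℕ) := by
      rw [← hcard, hq]; exact dvd_pow_self p ht.ne'
    have : p = ringChar F := (Nat.prime_dvd_prime_iff_eq hp hr).mp (hp.dvd_of_dvd_pow hpr)
    rw [this]; exact ringChar.charP F
  have hcharΩ : CharP Ω p :=
    charP_of_injective_algebraMap (algebraMap F Ω).injective p
  haveI : Fact p.Prime := ⟨hp⟩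
  haveI : ExpChar Ω p := ExpChar.prime hp
  set α : Ω := ((γ ^ i : Ωˣ) : Ω) with hα
  set β : Ω := α ^ P with hβ
  set ζ' : Ω := algebraMap L Ω ζ with hζ'
  set cΩ : Polynomial Ω := c.map (algebraMap F Ω) with hcΩ
  -- the evaluation point
  have hpt : ((γ ^ ((P * i) % n') : Ωˣ) : Ω) = β := by
    have h1 : γ ^ ((P * i) % n') = γ ^ (P * i) := by
      rw [← hγ]; exact pow_mod_orderOf γ (P * i)
    rw [h1, mul_comm P i, pow_mul, hβ, hα, Units.val_pow_eq_pow_val]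
  rw [hpt]
  -- divisibility
  have hdvd : (X ^ P - C β) ∣ cΩ := by
    have h1 : (X - C α) ∣ g.map (algebraMap F Ω) := by
      rw [dvd_iff_isRoot, IsRoot, eval_map, ← aeval_def]
      exact hg_roots i hi
    have h2 : (X - C α) ^ P ∣ cΩ := by
      calc (X - C α) ^ P ∣ (g.map (algebraMap F Ω)) ^ P := pow_dvd_pow_of_dvd h1 P
        _ = (g ^ P).map (algebraMap F Ω) := by rw [Polynomial.map_pow]
        _ ∣ cΩ := Polynomial.map_dvd _ hc_mem
    have h3 : (X - C α) ^ P = X ^ P - C β := by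
      rw [hPdef, sub_pow_expChar_pow, ← map_pow, ← hPdef, ← hβ]
    rwa [h3] at h2
  obtain ⟨h, hh⟩ := hdvd
  -- the weight function
  set w : ℕ → Ω := fun k => ζ' ^ (k % P) * β ^ (k / P) with hw
  have hwshift : ∀ k, w (P + k) = β * w k := by
    intro k
    simp only [hw]
    rw [Nat.add_mod_left, Nat.add_comm P k, Nat.add_div_right _ hP0, pow_succ]
    ring
  -- main computation: the folded evaluation equals a single sum
  have hfold : aeval β (foldPoly F L ζ P n' c)
      = ∑ k ∈ Finset.range (P * n'), cΩ.coeff k * w k := by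
    rw [foldPoly, map_sum]
    have hrw : ∀ j ∈ Finset.range n',
        aeval β (C (∑ u ∈ Finset.range P, algebraMap F L (c.coeff (u + j * P)) * ζ ^ u) * X ^ j)
          = ∑ u ∈ Finset.range P, cΩ.coeff (u + j * P) * w (u + j * P) := by
      intro j hj
      rw [map_mul, aeval_C, map_pow, aeval_X, map_sum, Finset.sum_mul]
      refine Finset.sum_congr rfl fun u hu => ?_
      rw [Finset.mem_range] at hu
      have hmod : (u + j * P) % P = u := by
        rw [Nat.add_mul_mod_self_right, Nat.mod_eq_of_lt hu]
      have hdiv : (u + j * P) / P = j := by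
        rw [Nat.add_mul_div_right _ _ hP0, Nat.div_eq_of_lt hu, Nat.zero_add]
      rw [hw]
      simp only [hmod, hdiv]
      rw [map_mul, map_pow, ← hζ', ← IsScalarTower.algebraMap_apply F L Ω, hcΩ, coeff_map]
      ring
    rw [Finset.sum_congr rfl hrw]
    rw [← Finset.sum_product']
    refine Finset.sum_nbij' (fun x => x.2 + x.1 * P) (fun k => (k / P, k % P)) ?_ ?_ ?_ ?_ ?_
    · rintro ⟨j, u⟩ hx
      simp only [Finset.mem_product, Finset.mem_range] at hx
      simp only [Finset.mem_range]
      calc u + j * P < P + j * P := by omega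
        _ = (j + 1) * P := by ring
        _ ≤ n' * P := Nat.mul_le_mul_right P (by omega)
        _ = P * n' := Nat.mul_comm _ _
    · intro k hk
      simp only [Finset.mem_range] at hk
      simp only [Finset.mem_product, Finset.mem_range]
      constructor
      · exact Nat.div_lt_of_lt_mul hk
      · exact Nat.mod_lt _ hP0
    · rintro ⟨j, u⟩ hx
      simp only [Finset.mem_product, Finset.mem_range] at hx
      have hmod : (u + j * P) % P = u := by
        rw [Nat.add_mul_mod_self_right, Nat.mod_eq_of_lt hx.2]
      have hdiv : (u + j * P) / P = j := by
        rw [Nat.add_mul_div_right _ _ hP0, Nat.div_eq_of_lt hx.2, Nat.zero_add]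
      simp [hmod, hdiv]
    · intro k hk
      exact Nat.mod_add_div' k P
    · rintro ⟨j, u⟩ hx; rfl
  rw [hfold]
  -- now show the sum vanishes
  by_cases hc0 : cΩ = 0
  · simp [hc0]
  -- degree bounds
  have hc0' : c ≠ 0 := fun hcc => hc0 (by simp [hcΩ, hcc])
  have hdegc : cΩ.natDegree < P * n' := by
    have : cΩ.degree = c.degree := degree_map_eq_of_injective (algebraMap F Ω).injective c
    rw [← natDegree_lt_iff_degree_lt hc0'] at hc_deg
    rwa [natDegree_map_eq_of_injective (algebraMap F Ω).injective]
  have hXP0 : (X ^ P - C β : Polynomial Ω) ≠ 0 := by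
    intro hcon
    have := natDegree_X_pow_sub_C (n := P) (r := β)
    rw [hcon] at this
    simp at this
    omega
  have hdegh : h.natDegree + P = cΩ.natDegree := by
    have h0 : h ≠ 0 := by rintro rfl; simp at hh; exact hc0 hh
    have := natDegree_mul hXP0 h0
    rw [← hh, natDegree_X_pow_sub_C] at this
    omega
  -- split the sum
  have hsum : ∀ k, cΩ.coeff k = h.coeff (k - P) * (if P ≤ k then 1 else 0) - β * h.coeff k := by
    intro k
    rw [hh, sub_mul, coeff_sub, coeff_C_mul, mul_comm (X ^ P : Polynomial Ω) h, coeff_mul_X_pow']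
    split <;> simp
  calc ∑ k ∈ Finset.range (P * n'), cΩ.coeff k * w k
      = (∑ k ∈ Finset.range (P * n'), (if P ≤ k then h.coeff (k - P) else 0) * w k)
        - ∑ k ∈ Finset.range (P * n'), β * (h.coeff k * w k) := by
        rw [← Finset.sum_sub_distrib]
        refine Finset.sum_congr rfl fun k _ => ?_
        rw [hsum k]
        split <;> ring
    _ = (∑ k ∈ Finset.range (P * n'), (if P ≤ k then h.coeff (k - P) else 0) * w k)
        - β * ∑ k ∈ Finset.range (P * n'), h.coeff k * w k := by rw [Finset.mul_sum]
    _ = 0 := by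
        have key : ∑ k ∈ Finset.range (P * n'), (if P ≤ k then h.coeff (k - P) else 0) * w k
            = β * ∑ k ∈ Finset.range (P * n'), h.coeff k * w k := by
          have e1 : ∑ k ∈ Finset.range (P * n'), (if P ≤ k then h.coeff (k - P) else 0) * w k
              = ∑ k ∈ Finset.range (P * n' - P), β * (h.coeff k * w k) := by
            rw [Finset.range_eq_Ico,
              ← Finset.sum_Ico_consecutive _ (Nat.zero_le P) (Nat.le_mul_of_pos_right P hn'0)]
            have hz : ∑ k ∈ Finset.Ico 0 P, (if P ≤ k then h.coeff (k - P) else 0) * w k = 0 := by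
              refine Finset.sum_eq_zero fun k hk => ?_
              rw [Finset.mem_Ico] at hk
              rw [if_neg (by omega), zero_mul]
            rw [hz, zero_add, Finset.sum_Ico_eq_sum_range]
            refine Finset.sum_congr rfl fun k _ => ?_
            rw [if_pos (Nat.le_add_right P k), Nat.add_sub_cancel_left, hwshift]
            ring
          rw [e1, ← Finset.mul_sum]
          congr 1
          refine Finset.sum_subset (Finset.range_subset_range.mpr (by omega : P * n' - P ≤ P * n'))
            fun k hk hk' => ?_
          rw [Finset.mem_range, not_lt] at hk'
          rw [coeff_eq_zero_of_natDegree_lt (by omega), zero_mul]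
        rw [key, sub_self]
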